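/- Let λ be a regular cardinal and let μ < λ be a regular cardinal. In any category, if ⟨M_i : i < μ⟩ is a chain of (<λ)-presentable objects indexed by μ whose colimit M is not (<λ)-presentable, then λ is a successor cardinal λ₀⁺ and μ = cf(λ₀). -/

import Mathlib

open CategoryTheory Limits Cardinal

universe u v u₂ v₂

/-- A preorder is `μ`-directed if every subset of cardinality `< μ` has an upper bound. -/
def IsCardDirected (μ : Cardinal.{v}) (J : Type v) [Preorder J] : Prop :=
  ∀ S : Set J, #S < μ → ∃ b, ∀ s ∈ S, s ≤ b

/-- An object is `μ`-presentable if its hom-functor preserves `μ`-directed colimits. -/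
def IsPresentableObj (μ : Cardinal.{v}) {K : Type u} [Category.{v} K] (M : K) : Prop :=
  ∀ (J : Type v) (_ : Preorder J), IsCardDirected μ J →
    Nonempty (PreservesColimitsOfShape J (coyoneda.obj (Opposite.op M)))

/-- `(<λ)`-presentable: `θ`-presentable for some regular `θ < max(λ, ℵ₁)`. -/
def IsLtPresentableObj (lam : Cardinal.{v}) {K : Type u} [Category.{v} K] (M : K) : Prop :=
  ∃ θ : Cardinal.{v}, θ.IsRegular ∧ θ < max lam (Cardinal.aleph 1) ∧ IsPresentableObj θ M

/-- `M` has presentability rank `lam`: the least regular cardinal at which `M` is presentable. -/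
def HasPresRank (lam : Cardinal.{v}) {K : Type u} [Category.{v} K] (M : K) : Prop :=
  lam.IsRegular ∧ IsPresentableObj lam M ∧
    ∀ ν : Cardinal.{v}, ν.IsRegular → IsPresentableObj ν M → lam ≤ ν

/-- `K` has all `μ`-directed colimits. -/
def HasMuDirectedColimits (μ : Cardinal.{v}) (K : Type u) [Category.{v} K] : Prop :=
  ∀ (J : Type v) (_ : Preorder J), IsCardDirected μ J → HasColimitsOfShape J K

/-- `(μ, <λ)`-accessibility of a category `K`. -/
def IsAccCat (μ lam : Cardinal.{v}) (K : Type u) [Category.{v} K] : Prop :=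
  HasMuDirectedColimits μ K ∧
  (∃ S : Set K, Small.{v} S ∧ ∀ M : K, IsLtPresentableObj lam M → ∃ N ∈ S, Nonempty (M ≅ N)) ∧
  (∀ M : K, ∃ (J : Type v) (_ : Preorder J) (D : J ⥤ K) (c : Cocone D),
     IsCardDirected μ J ∧ (∀ j, IsLtPresentableObj lam (D.obj j)) ∧
     Nonempty (IsColimit c) ∧ c.pt = M)

section
variable {K : Type u} [Category.{v} K]

lemma isPresentableObj_of_le {θ ν : Cardinal.{v}} (h : θ ≤ ν) {M : K}
    (hp : IsPresentableObj θ M) : IsPresentableObj ν M :=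
  fun J _ hJ => hp J _ (fun S hS => hJ S (hS.trans_le h))

lemma master {μ ν : Cardinal.{v}} (hν : ν.IsRegular) (hμν : μ < ν) (hμℵ : ℵ₀ ≤ μ)
    (D : μ.ord.ToType ⥤ K) (c : Cocone D) (hc : IsColimit c)
    (S : Set μ.ord.ToType) (hcof : ∀ j, ∃ s ∈ S, j ≤ s)
    (hp : ∀ i ∈ S, IsPresentableObj ν (D.obj i)) :
    IsPresentableObj ν c.pt := by
  have hμ0 : #(μ.ord.ToType) = μ := by rw [Cardinal.mk_toType, Cardinal.card_ord]
  have hSμ : #S ≤ μ := (Cardinal.mk_set_le S).trans hμ0.le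
  intro J _ hJ
  have hJd : ∀ (T : Set J), #T ≤ μ → ∃ b, ∀ x ∈ T, x ≤ b :=
    fun T hT => hJ T (hT.trans_lt hμν)
  have hne : Nonempty J := by
    obtain ⟨b, -⟩ := hJ ∅ (by simpa using hν.pos)
    exact ⟨b⟩
  have hdir : IsDirected J (· ≤ ·) := by
    constructor
    intro a b
    obtain ⟨d, hd⟩ := hJ {a, b} (((Set.toFinite ({a,b} : Set J)).lt_aleph0).trans_le hν.aleph0_le)
    exact ⟨d, hd a (by simp), hd b (by simp)⟩
  -- helper: rewrite arbitrary homs as homOfLE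
  have hfac : ∀ (i : μ.ord.ToType), i ∈ S → ∀ {N : J ⥤ K} (t : Cocone N), IsColimit t →
      ∀ (f0 : D.obj i ⟶ t.pt), ∃ (p : J) (g : D.obj i ⟶ N.obj p), g ≫ t.ι.app p = f0 := by
    intro i hi N t ht f0
    obtain ⟨inst⟩ := hp i hi J _ hJ
    obtain ⟨p, g, hg⟩ := Types.jointly_surjective (N ⋙ coyoneda.obj (Opposite.op (D.obj i)))
      (isColimitOfPreserves (coyoneda.obj (Opposite.op (D.obj i))) ht) f0
    exact ⟨p, g, hg⟩
  have heq : ∀ (i : μ.ord.ToType), i ∈ S → ∀ {N : J ⥤ K} (t : Cocone N), IsColimit t →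
      ∀ (p : J) (a b : D.obj i ⟶ N.obj p), a ≫ t.ι.app p = b ≫ t.ι.app p →
      ∃ (q : J) (hq : p ≤ q), a ≫ N.map (homOfLE hq) = b ≫ N.map (homOfLE hq) := by
    intro i hi N t ht p a b hab
    obtain ⟨inst⟩ := hp i hi J _ hJ
    have hti := isColimitOfPreserves (coyoneda.obj (Opposite.op (D.obj i))) ht
    obtain ⟨k, f1, f2, he⟩ := (Types.FilteredColimit.isColimit_eq_iff
      (N ⋙ coyoneda.obj (Opposite.op (D.obj i))) hti (i := p) (j := p) (xi := a) (xj := b)).mp hab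
    rw [Subsingleton.elim f1 f2] at he
    refine ⟨k, leOfHom f2, ?_⟩
    rwa [Subsingleton.elim (homOfLE (leOfHom f2)) f2]
  choose sfn hsS hsle using hcof
  refine ⟨⟨fun {N} => ⟨fun {t} ht => ⟨?_⟩⟩⟩⟩
  refine Types.FilteredColimit.isColimitOf _ _ ?_ ?_
  · -- surjectivity
    intro f
    have h1 : ∀ i : S, ∃ (p : J) (g : D.obj i.1 ⟶ N.obj p), g ≫ t.ι.app p = c.ι.app i.1 ≫ f :=
      fun i => hfac i.1 i.2 t ht _
    choose p g hg using h1
    obtain ⟨p₀, hp₀⟩ := hJd (Set.range p) (mk_range_le.trans hSμ)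
    set P := {x : S × S // (x.1 : μ.ord.ToType) ≤ x.2} with hPdef
    have hPμ : #P ≤ μ := by
      refine (mk_subtype_le _).trans ?_
      rw [mk_prod]
      simp only [lift_id]
      exact (mul_le_mul' hSμ hSμ).trans (mul_eq_self hμℵ).le
    have h2 : ∀ x : P, ∃ (q : J) (hq : p₀ ≤ q),
        (g x.1.1 ≫ N.map (homOfLE (hp₀ _ ⟨x.1.1, rfl⟩))) ≫ N.map (homOfLE hq) =
        (D.map (homOfLE x.2) ≫ g x.1.2 ≫ N.map (homOfLE (hp₀ _ ⟨x.1.2, rfl⟩))) ≫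
          N.map (homOfLE hq) := by
      intro x
      refine heq x.1.1.1 x.1.1.2 t ht p₀ _ _ ?_
      have w1 : (g x.1.1 ≫ N.map (homOfLE (hp₀ _ ⟨x.1.1, rfl⟩))) ≫ t.ι.app p₀ =
          c.ι.app x.1.1.1 ≫ f := by
        rw [Category.assoc, t.w]; exact hg x.1.1
      have w2 : (D.map (homOfLE x.2) ≫ g x.1.2 ≫ N.map (homOfLE (hp₀ _ ⟨x.1.2, rfl⟩))) ≫
          t.ι.app p₀ = c.ι.app x.1.1.1 ≫ f := by
        rw [Category.assoc, Category.assoc, t.w, hg x.1.2, ← Category.assoc, c.w]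
      rw [w1, w2]
    choose q hq he using h2
    obtain ⟨ps, hps⟩ := hJd (Set.range (fun o : Option P => o.elim p₀ q))
      (mk_range_le.trans (by
        rw [mk_option]
        exact (add_le_add hPμ (one_le_aleph0.trans hμℵ)).trans (add_eq_self hμℵ).le))
    have hp₀s : p₀ ≤ ps := hps _ ⟨none, rfl⟩
    have hqs : ∀ x : P, q x ≤ ps := fun x => hps _ ⟨some x, rfl⟩
    have hips : ∀ i : S, p i ≤ ps := fun i => (hp₀ _ ⟨i, rfl⟩).trans hp₀s
    have hGt : ∀ i : S, (g i ≫ N.map (homOfLE (hips i))) ≫ t.ι.app ps = c.ι.app i.1 ≫ f := by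
      intro i
      rw [Category.assoc, t.w]
      exact hg i
    have hpair : ∀ (i i' : S) (h : (i : μ.ord.ToType) ≤ i'),
        g i ≫ N.map (homOfLE (hips i)) =
          D.map (homOfLE h) ≫ g i' ≫ N.map (homOfLE (hips i')) := by
      intro i i' h
      have key := congrArg (· ≫ N.map (homOfLE (hqs ⟨(i, i'), h⟩))) (he ⟨(i, i'), h⟩)
      simp only [Category.assoc, ← Functor.map_comp, homOfLE_comp] at key ⊢
      exact key
    have hnat : ∀ (j j' : μ.ord.ToType) (u : j ⟶ j'),
        D.map u ≫ (D.map (homOfLE (hsle j')) ≫ g ⟨sfn j', hsS j'⟩ ≫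
            N.map (homOfLE (hips ⟨sfn j', hsS j'⟩))) =
          D.map (homOfLE (hsle j)) ≫ g ⟨sfn j, hsS j⟩ ≫
            N.map (homOfLE (hips ⟨sfn j, hsS j⟩)) := by
      intro j j' u
      have h1 : sfn j ≤ sfn (max (sfn j) (sfn j')) := (le_max_left _ _).trans (hsle _)
      have h2' : sfn j' ≤ sfn (max (sfn j) (sfn j')) := (le_max_right _ _).trans (hsle _)
      rw [hpair ⟨sfn j, hsS j⟩ ⟨sfn _, hsS _⟩ h1, hpair ⟨sfn j', hsS j'⟩ ⟨sfn _, hsS _⟩ h2']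
      rw [Subsingleton.elim u (homOfLE (leOfHom u))]
      simp only [← Category.assoc, ← Functor.map_comp, homOfLE_comp]
    let cn : Cocone D := ⟨N.obj ps,
      { app := fun j => D.map (homOfLE (hsle j)) ≫ g ⟨sfn j, hsS j⟩ ≫
          N.map (homOfLE (hips ⟨sfn j, hsS j⟩))
        naturality := fun j j' u => by
          dsimp only [Functor.const_obj_obj, Functor.const_obj_map]
          rw [Category.comp_id]
          exact hnat j j' u }⟩
    have hcn : ∀ j, cn.ι.app j ≫ t.ι.app ps = c.ι.app j ≫ f := by
      intro j
      show (D.map (homOfLE (hsle j)) ≫ g ⟨sfn j, hsS j⟩ ≫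
          N.map (homOfLE (hips ⟨sfn j, hsS j⟩))) ≫ t.ι.app ps = c.ι.app j ≫ f
      rw [Category.assoc, Category.assoc, t.w, hg ⟨sfn j, hsS j⟩, ← Category.assoc, c.w]
    refine ⟨ps, hc.desc cn, hc.hom_ext fun j => ?_⟩
    show c.ι.app j ≫ f = c.ι.app j ≫ (hc.desc cn ≫ t.ι.app ps)
    rw [← Category.assoc, hc.fac, hcn]
  · -- injectivity
    intro pa pb fa fb hab
    obtain ⟨pc, hpc⟩ := hJ {pa, pb} (((Set.toFinite ({pa, pb} : Set J)).lt_aleph0).trans_le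
      hν.aleph0_le)
    have hca : pa ≤ pc := hpc pa (by simp)
    have hcb : pb ≤ pc := hpc pb (by simp)
    have hab' : (fa ≫ N.map (homOfLE hca)) ≫ t.ι.app pc =
        (fb ≫ N.map (homOfLE hcb)) ≫ t.ι.app pc := by
      rw [Category.assoc, Category.assoc, t.w, t.w]
      exact hab
    have h3 : ∀ i : S, ∃ (qi : J) (hqi : pc ≤ qi),
        (c.ι.app i.1 ≫ fa ≫ N.map (homOfLE hca)) ≫ N.map (homOfLE hqi) =
        (c.ι.app i.1 ≫ fb ≫ N.map (homOfLE hcb)) ≫ N.map (homOfLE hqi) := by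
      intro i
      refine heq i.1 i.2 t ht pc _ _ ?_
      have := hab'
      simp only [Category.assoc] at this ⊢
      rw [this]
    choose qi hqi hei using h3
    obtain ⟨pd, hpd⟩ := hJd (Set.range (fun o : Option S => o.elim pc qi))
      (mk_range_le.trans (by
        rw [mk_option]
        exact (add_le_add hSμ (one_le_aleph0.trans hμℵ)).trans (add_eq_self hμℵ).le))
    have hcd : pc ≤ pd := hpd _ ⟨none, rfl⟩
    have hqd : ∀ i : S, qi i ≤ pd := fun i => hpd _ ⟨some i, rfl⟩
    refine ⟨pd, homOfLE (hca.trans hcd), homOfLE (hcb.trans hcd), ?_⟩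
    show fa ≫ N.map (homOfLE (hca.trans hcd)) = fb ≫ N.map (homOfLE (hcb.trans hcd))
    have main : fa ≫ N.map (homOfLE (hca.trans hcd)) = fb ≫ N.map (homOfLE (hcb.trans hcd)) := by
      refine hc.hom_ext fun j => ?_
      have hj : j ≤ sfn j := hsle j
      have e1 : c.ι.app j = D.map (homOfLE hj) ≫ c.ι.app (sfn j) := (c.w (homOfLE hj)).symm
      rw [e1]
      have key := congrArg (· ≫ N.map (homOfLE (hqd ⟨sfn j, hsS j⟩))) (hei ⟨sfn j, hsS j⟩)
      simp only [Category.assoc, ← Functor.map_comp, homOfLE_comp] at key ⊢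
      rw [key]
    exact main
end

/-- If `⟨M_i : i < μ⟩` is a chain (indexed by the ordinal `μ`, with `μ < λ` both regular)
of `(<λ)`-presentable objects whose colimit is not `(<λ)`-presentable, then `λ` is a
successor cardinal `λ₀⁺` and `μ = cf(λ₀)`. -/
theorem stmt18 {K : Type u} [Category.{v} K] (lam μ : Cardinal.{v})
    (hlam : lam.IsRegular) (hμ : μ.IsRegular) (hμlam : μ < lam)
    (D : μ.ord.ToType ⥤ K)
    (hpres : ∀ i, IsLtPresentableObj lam (D.obj i))
    (c : Cocone D) (hc : IsColimit c)
    (hM : ¬ IsLtPresentableObj lam c.pt) :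
    ∃ lam₀ : Cardinal.{v}, lam = Order.succ lam₀ ∧ μ = lam₀.ord.cof := by
  have hal : ℵ₀ ≤ μ := hμ.aleph0_le
  have hlam_aleph : aleph 1 ≤ lam := by
    rw [← succ_aleph0]; exact Order.succ_le_of_lt (hal.trans_lt hμlam)
  have hmax : max lam (aleph 1) = lam := max_eq_left hlam_aleph
  choose θ hθreg hθlt hθpres using hpres
  rw [hmax] at hθlt
  have hμ0 : #(μ.ord.ToType) = μ := by rw [Cardinal.mk_toType, Cardinal.card_ord]
  have key : ∀ ν : Cardinal.{v}, ν.IsRegular → μ < ν → ν < lam →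
      ∀ S : Set μ.ord.ToType, (∀ j, ∃ s ∈ S, j ≤ s) → (∀ i ∈ S, θ i ≤ ν) → False := by
    intro ν hν hμν hnl S hcof hb
    exact hM ⟨ν, hν, hnl.trans_le (le_max_left _ _), master hν hμν hal D c hc S hcof
      (fun i hi => isPresentableObj_of_le (hb i hi) (hθpres i))⟩
  by_cases hsucc : ∃ lam₀, lam = Order.succ lam₀
  · obtain ⟨lam₀, rfl⟩ := hsucc
    refine ⟨lam₀, rfl, ?_⟩
    by_contra hne
    have hmul0 : μ ≤ lam₀ := Order.lt_succ_iff.mp hμlam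
    have hthl0 : ∀ i, θ i ≤ lam₀ := fun i => Order.lt_succ_iff.mp (hθlt i)
    have hall0 : ℵ₀ ≤ lam₀ := hal.trans hmul0
    rcases lt_or_gt_of_ne hne with hlt | hgt
    · -- μ < cof lam₀
      by_cases hreg : lam₀.IsRegular
      · exact key lam₀ hreg (hlt.trans_le (by rw [hreg.cof_eq])) (Order.lt_succ _)
          Set.univ (fun j => ⟨j, Set.mem_univ _, le_refl _⟩) (fun i _ => hthl0 i)
      · have hθs : ∀ i, θ i < lam₀ := fun i =>
          lt_of_le_of_ne (hthl0 i) (fun h => hreg (h ▸ hθreg i))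
        have hsup : (⨆ i, θ i) < lam₀ := Ordinal.iSup_lt (by rw [hμ0]; exact hlt) hθs
        have hmul0' : μ < lam₀ := hlt.trans_le (Ordinal.cof_ord_le _)
        refine key (Order.succ (max (⨆ i, θ i) μ))
          (isRegular_succ (hal.trans (le_max_right _ _)))
          ((le_max_right _ _).trans_lt (Order.lt_succ _))
          (lt_of_le_of_lt (Order.succ_le_of_lt (max_lt hsup hmul0')) (Order.lt_succ _))
          Set.univ (fun j => ⟨j, Set.mem_univ _, le_refl _⟩) (fun i _ => ?_)
        exact ((le_ciSup (Cardinal.bddAbove_range _) i).trans (le_max_left _ _)).trans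
          (Order.le_succ _)
    · -- cof lam₀ < μ
      have hmul0' : μ < lam₀ := by
        rcases hmul0.lt_or_eq with h | h
        · exact h
        · exfalso
          have : lam₀.IsRegular := h ▸ hμ
          rw [this.cof_eq] at hgt
          exact absurd (h ▸ hgt) (lt_irrefl μ)
      have hsing : ¬ lam₀.IsRegular := fun h => by
        rw [h.cof_eq] at hgt
        exact absurd (hgt.trans_le hmul0) (lt_irrefl lam₀)
      have hθs : ∀ i, θ i < lam₀ := fun i =>
        lt_of_le_of_ne (hthl0 i) (fun h => hsing (h ▸ hθreg i))
      obtain ⟨ι, d, hlsub, hcard⟩ := Ordinal.exists_lsub_cof lam₀.ord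
      have hjv : ∀ i : μ.ord.ToType, ∃ j : ι, (θ i).ord ≤ d j := by
        intro i
        refine (Ordinal.lt_lsub_iff).mp ?_
        rw [hlsub]
        exact Cardinal.ord_lt_ord.mpr (hθs i)
      choose jv hjvle using hjv
      have hex : ∃ j : ι, ∀ b : μ.ord.ToType, ∃ i, (θ i).ord ≤ d j ∧ b ≤ i := by
        by_contra hcon
        push_neg at hcon
        choose b hb using hcon
        have hwo : IsWellOrder μ.ord.ToType (· < ·) := isWellOrder_lt
        have hbd : Set.Bounded (· < ·) (Set.range b) := by
          suffices hs : #(Set.range b) <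
              (Ordinal.type ((· < ·) : μ.ord.ToType → μ.ord.ToType → Prop)).cof by
            by_contra hnb
            rw [Set.not_bounded_iff] at hnb
            have hcf : IsCofinal (Set.range b) := fun a => by
              obtain ⟨y, hy, hya⟩ := hnb a
              exact ⟨y, hy, not_lt.mp hya⟩
            have h3 := Order.cof_le hcf
            rw [Ordinal.cof_toType] at h3
            rw [Ordinal.type_toType] at hs
            exact absurd (h3.trans_lt hs) (lt_irrefl _)
          have ht : Ordinal.type ((· < ·) : μ.ord.ToType → μ.ord.ToType → Prop) = μ.ord :=
            Ordinal.type_toType _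
          rw [ht, hμ.cof_eq]
          exact (mk_range_le.trans_eq hcard).trans_lt hgt
        obtain ⟨x, hx⟩ := hbd
        have h1 : x < b (jv x) := hb (jv x) x (hjvle x)
        have h2 : b (jv x) < x := hx _ ⟨jv x, rfl⟩
        exact absurd (h1.trans h2) (lt_irrefl x)
      obtain ⟨j, hj⟩ := hex
      have hdj : d j < lam₀.ord := hlsub ▸ Ordinal.lt_lsub d j
      have hρ : (d j).card < lam₀ := Cardinal.lt_ord.mp hdj
      refine key (Order.succ (max (d j).card μ))
        (isRegular_succ (hal.trans (le_max_right _ _)))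
        ((le_max_right _ _).trans_lt (Order.lt_succ _))
        (lt_of_le_of_lt (Order.succ_le_of_lt (max_lt hρ hmul0')) (Order.lt_succ _))
        {i | (θ i).ord ≤ d j} (fun b => ?_) (fun i hi => ?_)
      · obtain ⟨i, hi1, hi2⟩ := hj b
        exact ⟨i, hi1, hi2⟩
      · have : θ i ≤ (d j).card := by
          have := Ordinal.card_le_card hi
          rwa [Cardinal.card_ord] at this
        exact (this.trans (le_max_left _ _)).trans (Order.le_succ _)
  · exfalso
    have hsup : (⨆ i, θ i) < lam := Ordinal.iSup_lt
      (by rw [hμ0, hlam.cof_eq]; exact hμlam) hθlt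
    have hθs : max (⨆ i, θ i) μ < lam := max_lt hsup hμlam
    have hsl : Order.succ (max (⨆ i, θ i) μ) < lam :=
      lt_of_le_of_ne (Order.succ_le_of_lt hθs) (fun h => hsucc ⟨_, h.symm⟩)
    refine key _ (isRegular_succ (hal.trans (le_max_right _ _)))
      ((le_max_right _ _).trans_lt (Order.lt_succ _)) hsl
      Set.univ (fun j => ⟨j, Set.mem_univ _, le_refl _⟩) (fun i _ => ?_)
    exact ((le_ciSup (Cardinal.bddAbove_range _) i).trans (le_max_left _ _)).trans
      (Order.le_succ _)
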